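/- Any linear map L: ℝ^n → ℝ^n that is permutation equivariant (L(Πx) = ΠL(x) for every n×n permutation matrix Π) must be of the form L(x) = αx + β(𝟏ᵀx)𝟏 for some scalars α, β ∈ ℝ, provided n ≥ 2. -/

import Mathlib

/-- Any permutation-equivariant linear map `L : ℝ^n → ℝ^n` (with `n ≥ 2`) has
the form `L(x) = α x + β (𝟏ᵀx) 𝟏` for some scalars `α, β`. -/
theorem equivariant_linear_characterization (n : ℕ) (hn : 2 ≤ n)
    (L : (Fin n → ℝ) →ₗ[ℝ] (Fin n → ℝ))
    (hL : ∀ (σ : Equiv.Perm (Fin n)) (x : Fin n → ℝ),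
      L (fun i => x (σ⁻¹ i)) = fun i => L x (σ⁻¹ i)) :
    ∃ α β : ℝ, ∀ (x : Fin n → ℝ) (i : Fin n),
      L x i = α * x i + β * ∑ j, x j := by
  haveI : NeZero n := ⟨by omega⟩
  have h01 : (0 : Fin n) ≠ 1 := by
    simp [Fin.ext_iff, Fin.val_one', Nat.mod_eq_of_lt (by omega : 1 < n)]
  set c := L (Pi.single 0 1) 0 with hc
  set b := L (Pi.single 0 1) 1 with hb
  have key : ∀ (σ : Equiv.Perm (Fin n)) (i : Fin n),
      L (Pi.single (σ 0) 1) i = L (Pi.single 0 1) (σ⁻¹ i) := by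
    intro σ i
    have h := hL σ (Pi.single 0 1)
    have h2 : (fun i => (Pi.single (0:Fin n) (1:ℝ) : Fin n → ℝ) (σ⁻¹ i)) = (Pi.single (σ 0) 1 : Fin n → ℝ) := by
      funext j
      simp only [Pi.single_apply]
      by_cases hj : j = σ 0
      · have : σ⁻¹ j = 0 := by rw [hj]; simp
        simp [hj, this]
      · rw [if_neg hj, if_neg]
        intro hcon
        exact hj (by rw [← hcon]; simp)
    rw [h2] at h
    exact congrFun h i
  have hbasis : ∀ j i : Fin n, L (Pi.single j 1) i = if i = j then c else b := by
    intro j i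
    by_cases hij : i = j
    · subst hij
      have h := key (Equiv.swap 0 i) i
      rw [Equiv.swap_apply_left] at h
      rw [if_pos rfl, hc, h]
      simp [Equiv.swap_apply_right]
    · set k := Equiv.swap (0 : Fin n) j 1 with hk
      have hjk : j ≠ k := by
        have : Equiv.swap (0 : Fin n) j 0 = j := Equiv.swap_apply_left 0 j
        rw [hk, ← this]
        exact fun hcon => h01 ((Equiv.swap (0:Fin n) j).injective hcon)
      set σ : Equiv.Perm (Fin n) := (Equiv.swap 0 j).trans (Equiv.swap k i) with hσ
      have hσ0 : σ 0 = j := by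
        simp only [hσ, Equiv.trans_apply, Equiv.swap_apply_left]
        rw [Equiv.swap_apply_of_ne_of_ne hjk (fun hcon => hij hcon.symm)]
      have hσ1 : σ 1 = i := by
        simp only [hσ, Equiv.trans_apply]
        rw [← hk, Equiv.swap_apply_left]
      have h := key σ i
      rw [hσ0] at h
      have hinv : σ⁻¹ i = 1 := by rw [← hσ1]; exact Equiv.symm_apply_apply σ 1
      rw [hinv] at h
      rw [if_neg hij, hb, h]
  refine ⟨c - b, b, fun x i => ?_⟩
  have hx : x = ∑ j, x j • (Pi.single j (1:ℝ) : Fin n → ℝ) := by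
    ext i
    simp [Pi.single_apply]
  calc L x i = ∑ j, x j * L (Pi.single j 1) i := by
        conv_lhs => rw [hx]
        rw [map_sum]
        simp [Finset.sum_apply]
    _ = ∑ j, (x j * b + if j = i then x j * (c - b) else 0) := by
        refine Finset.sum_congr rfl (fun j _ => ?_)
        rw [hbasis]
        by_cases hij : i = j
        · rw [if_pos hij, if_pos hij.symm]; ring
        · rw [if_neg hij, if_neg (fun h => hij h.symm)]; ring
    _ = (c - b) * x i + b * ∑ j, x j := by
        rw [Finset.sum_add_distrib, Finset.sum_ite_eq' Finset.univ i (fun j => x j * (c - b))]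
        simp only [Finset.mem_univ, if_true]
        rw [Finset.mul_sum]
        simp_rw [mul_comm b]
        ring
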